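/- Let γ ∈ (0,1), d ≥ 1, and let ψ_S = ψ ∘ S : H(A_γ^d) → T(A_γ-multi-index) be the composition of the symmetrization map S (applying the letter map (i_1⋯i_n) ↦ corresponding multi-index at each decoration) with the contracting arborification ψ into the quasi-shuffle algebra over the multi-index alphabet A = {α ∈ N^d \ {0} : |α| ≤ N_γ} with bracket [α,β] = α+β if |α+β| ≤ N_γ, else 0. Then for all 1 ≤ n ≤ N_γ and i_1,…,i_n ∈ {1,…,d}, ψ_S(⟪i_1⋯i_n⟫) = [e_{i_1}⋯e_{i_n}], the letter e_{i_1}+⋯+e_{i_n}. -/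

import Mathlib

open Finsupp
open scoped Classical TensorProduct

noncomputable section

abbrev TA (A : Type) := List A →₀ ℝ

def wordE {A : Type} (w : List A) : TA A := Finsupp.single w 1

def appLetter {A : Type} (a : A) : TA A →ₗ[ℝ] TA A :=
  Finsupp.lmapDomain ℝ ℝ (fun u => u ++ [a])

def appGen {A : Type} (c : A →₀ ℝ) (y : TA A) : TA A :=
  c.sum fun x r => r • appLetter x y

def IsQuasiShuffle {A : Type} (br : A → A → (A →₀ ℝ))
    (M : TA A →ₗ[ℝ] TA A →ₗ[ℝ] TA A) : Prop :=
  (∀ x : TA A, M (wordE []) x = x) ∧ (∀ x : TA A, M x (wordE []) = x) ∧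
  ∀ (v w : List A) (a b : A),
    M (wordE (v ++ [a])) (wordE (w ++ [b])) =
      appLetter a (M (wordE v) (wordE (w ++ [b]))) +
      appLetter b (M (wordE (v ++ [a])) (wordE w)) +
      appGen (br a b) (M (wordE v) (wordE w))

inductive RT (A : Type) : Type
  | node : A → List (RT A) → RT A

abbrev HBCK (A : Type) := MonoidAlgebra ℝ (FreeMonoid (RT A))

def Bplus {A : Type} (a : A) : HBCK A →ₗ[ℝ] HBCK A :=
  MonoidAlgebra.mapDomainLinearMap ℝ ℝ
    (fun f : FreeMonoid (RT A) => FreeMonoid.of (RT.node a (FreeMonoid.toList f)))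

def fE {A : Type} (f : FreeMonoid (RT A)) : HBCK A := MonoidAlgebra.single f 1

/-- The multi-index alphabet `{α ∈ ℕ^d \ {0} : |α| ≤ N_γ}`. -/
abbrev AIdx (d Nγ : ℕ) := {α : Fin d → ℕ // 0 < (∑ j, α j) ∧ (∑ j, α j) ≤ Nγ}

/-- The bracket on the multi-index alphabet: `[α,β] = α + β` if `|α + β| ≤ N_γ`,
and `0` otherwise. -/
def brIdx (d Nγ : ℕ) (α β : AIdx d Nγ) : AIdx d Nγ →₀ ℝ :=
  if h : (∑ j, (α.val j + β.val j)) ≤ Nγ then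
    Finsupp.single ⟨fun j => α.val j + β.val j, by
      refine ⟨?_, h⟩
      rw [Finset.sum_add_distrib]
      exact lt_of_lt_of_le α.property.1 (Nat.le_add_right _ _)⟩ 1
  else 0

/-- The sub-tuple of `l` indexed by a set of positions, in increasing order. -/
def subL {d : ℕ} (l : List (Fin d)) (S : Finset (Fin l.length)) : List (Fin d) :=
  (S.sort (· ≤ ·)).map l.get

/-- The forest of single nodes `•_{i₁}⋯•_{iₙ}` in the BCK algebra over the
alphabet of tuples. -/
def dotPC {d : ℕ} (l : List (Fin d)) : HBCK (List (Fin d)) :=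
  (l.map fun i => fE (FreeMonoid.ofList [RT.node [i] []])).prod

/-- The bracket polynomial `⟪i₁⋯iₙ⟫` in the BCK algebra over tuples. -/
def bpOfC {d : ℕ} (l : List (Fin d)) : HBCK (List (Fin d)) :=
  dotPC l -
    ∑ S ∈ (Finset.univ : Finset (Finset (Fin l.length))).filter
        (fun S => S ≠ ∅ ∧ S ≠ Finset.univ),
      Bplus (subL l S) (dotPC (subL l Sᶜ))

section Aux

lemma appLetter_wordE {A : Type} (a : A) (w : List A) :
    appLetter a (wordE w) = wordE (w ++ [a]) := by
  simp [appLetter, wordE, Finsupp.lmapDomain, Finsupp.mapDomain_single]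

lemma appGen_single {A : Type} (c : A) (y : TA A) :
    appGen (Finsupp.single c (1 : ℝ)) y = appLetter c y := by
  simp [appGen, Finsupp.sum_single_index]

lemma appGen_add {A : Type} (c : A →₀ ℝ) (y z : TA A) :
    appGen c (y + z) = appGen c y + appGen c z := by
  simp [appGen, map_add, smul_add, Finset.sum_add_distrib, Finsupp.sum]

lemma appGen_smul {A : Type} (c : A →₀ ℝ) (r : ℝ) (y : TA A) :
    appGen c (r • y) = r • appGen c y := by
  simp [appGen, map_smul, Finsupp.sum, Finset.smul_sum, smul_comm r]

lemma appGen_zero {A : Type} (c : A →₀ ℝ) : appGen c (0 : TA A) = 0 := by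
  simp [appGen, Finsupp.sum]

lemma sum_count_fin {d : ℕ} (t : List (Fin d)) : ∑ j, t.count j = t.length := by
  induction t with
  | nil => simp
  | cons i t ih =>
      simp only [List.count_cons, Finset.sum_add_distrib, ih, List.length_cons]
      simp

def mkI {d Nγ : ℕ} (e0 : AIdx d Nγ) (t : List (Fin d)) : AIdx d Nγ :=
  if h : 0 < t.length ∧ t.length ≤ Nγ then
    ⟨fun j => t.count j, by rw [sum_count_fin]; exact h⟩
  else e0

lemma mkI_val {d Nγ : ℕ} (e0 : AIdx d Nγ) (t : List (Fin d))
    (h1 : 0 < t.length) (h2 : t.length ≤ Nγ) (j : Fin d) :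
    (mkI e0 t).val j = t.count j := by
  rw [mkI, dif_pos ⟨h1, h2⟩]

end Aux
section Aux2

lemma sort_fin_eq {n : ℕ} (S : Finset (Fin n)) :
    S.sort (· ≤ ·) = (List.finRange n).filter (fun j => decide (j ∈ S)) := by
  refine (fun hp h1 h2 => List.Perm.eq_of_pairwise' (r := (· ≤ ·)) h1 h2 hp) ?_ ?_ ?_
  · refine (List.perm_ext_iff_of_nodup (Finset.sort_nodup _ _) ?_).2 ?_
    · exact (List.nodup_finRange n).filter _
    · intro a
      simp [Finset.mem_sort, List.mem_filter, List.mem_finRange]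
  · exact Finset.pairwise_sort _ _
  · exact List.Pairwise.sublist List.filter_sublist ((List.pairwise_lt_finRange n).imp le_of_lt)

lemma subL_empty {d : ℕ} (l : List (Fin d)) : subL l (∅ : Finset (Fin l.length)) = [] := by
  simp [subL, Finset.sort_empty]

lemma subL_univ {d : ℕ} (l : List (Fin d)) : subL l (Finset.univ : Finset (Fin l.length)) = l := by
  rw [subL, sort_fin_eq]
  simp [List.map_get_finRange]

lemma length_subL {d : ℕ} (l : List (Fin d)) (S : Finset (Fin l.length)) :
    (subL l S).length = S.card := by
  simp [subL, Finset.length_sort]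

end Aux2
section Aux3

/-- preimage of a subset of `Fin (m+1)` under `Fin.succ`. -/
def downS {m : ℕ} (S : Finset (Fin (m + 1))) : Finset (Fin m) :=
  Finset.univ.filter (fun j => j.succ ∈ S)

lemma mem_downS {m : ℕ} (S : Finset (Fin (m + 1))) (j : Fin m) :
    j ∈ downS S ↔ j.succ ∈ S := by simp [downS]

lemma downS_compl {m : ℕ} (S : Finset (Fin (m + 1))) : downS Sᶜ = (downS S)ᶜ := by
  ext j; simp [mem_downS]

lemma subL_cons {d : ℕ} (i : Fin d) (l' : List (Fin d)) (S : Finset (Fin (l'.length + 1))) :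
    subL (i :: l') S =
      (if (0 : Fin (l'.length + 1)) ∈ S then [i] else []) ++ subL l' (downS S) := by
  rw [subL, subL, sort_fin_eq]; erw [sort_fin_eq]
  simp only [List.length_cons]
  rw [show List.finRange (l'.length + 1) = (0 : Fin (l'.length+1)) :: (List.finRange l'.length).map Fin.succ from List.finRange_succ,
    List.filter_cons, List.filter_map]
  have h1 : ((fun j : Fin (l'.length+1) => decide (j ∈ S)) ∘ Fin.succ) =
      (fun j : Fin l'.length => decide (j ∈ downS S)) := by
    funext j; simp [mem_downS]
  have h2 : ((i :: l').get ∘ Fin.succ) = l'.get := by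
    funext j; simp
  rw [h1]
  by_cases h0 : (0 : Fin (l'.length + 1)) ∈ S <;>
    simp [h0, List.map_map, h2]

def splitE (m : ℕ) : Finset (Fin (m + 1)) ≃ Bool × Finset (Fin m) where
  toFun S := (decide ((0 : Fin (m + 1)) ∈ S), downS S)
  invFun p := (if p.1 then {(0 : Fin (m + 1))} else ∅) ∪ p.2.image Fin.succ
  left_inv S := by
    ext k
    induction k using Fin.cases with
    | zero =>
        by_cases h0 : (0 : Fin (m + 1)) ∈ S <;>
          simp [h0, Fin.succ_ne_zero, eq_comm (a := (0 : Fin (m+1)))]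
    | succ j =>
        by_cases h0 : (0 : Fin (m + 1)) ∈ S <;>
          simp [h0, Fin.succ_ne_zero, mem_downS, Fin.succ_inj]
  right_inv p := by
    obtain ⟨b, T⟩ := p
    refine Prod.ext ?_ ?_
    · cases b <;> simp [Fin.succ_ne_zero, eq_comm (a := (0 : Fin (m+1)))]
    · ext j
      cases b <;> simp [mem_downS, Fin.succ_ne_zero, Fin.succ_inj]

lemma mem_zero_splitE_symm {m : ℕ} (b : Bool) (T : Finset (Fin m)) :
    ((0 : Fin (m + 1)) ∈ (splitE m).symm (b, T)) ↔ b = true := by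
  cases b <;> simp [splitE, Fin.succ_ne_zero, eq_comm (a := (0 : Fin (m+1)))]

lemma downS_splitE_symm {m : ℕ} (b : Bool) (T : Finset (Fin m)) :
    downS ((splitE m).symm (b, T)) = T := by
  have := (splitE m).right_inv (b, T)
  exact congrArg Prod.snd this

lemma splitE_symm_eq_empty {m : ℕ} (b : Bool) (T : Finset (Fin m)) :
    (splitE m).symm (b, T) = ∅ ↔ b = false ∧ T = ∅ := by
  cases b <;> simp [splitE, Finset.union_eq_empty, Finset.image_eq_empty,
    Finset.singleton_ne_empty]

end Aux3
section Aux4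

variable {A : Type} {br : A → A → (A →₀ ℝ)} {M : TA A →ₗ[ℝ] TA A →ₗ[ℝ] TA A}

lemma qs_letter (hM : IsQuasiShuffle br M) (a b : A) (y : TA A) :
    M (wordE [a]) (appLetter b y) =
      appLetter a (appLetter b y) + appLetter b (M (wordE [a]) y) + appGen (br a b) y := by
  induction y using Finsupp.induction_linear with
  | zero => simp [appGen_zero]
  | add y z hy hz =>
      simp only [map_add, hy, hz, appGen_add]
      abel
  | single w r =>
      have hw : (Finsupp.single w r : TA A) = r • wordE w := by
        simp [wordE, Finsupp.smul_single]
      rw [hw]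
      simp only [map_smul, appGen_smul, smul_add]
      have h := hM.2.2 [] w a b
      simp only [List.nil_append, hM.1] at h
      rw [appLetter_wordE, h]
      simp [smul_add]

def Pprod {d Nγ : ℕ} (M' : TA (AIdx d Nγ) →ₗ[ℝ] TA (AIdx d Nγ) →ₗ[ℝ] TA (AIdx d Nγ))
    (e0 : AIdx d Nγ) : List (Fin d) → TA (AIdx d Nγ)
  | [] => wordE []
  | i :: l => M' (wordE [mkI e0 [i]]) (Pprod M' e0 l)

end Aux4
section Aux5

lemma brIdx_mkI {d Nγ : ℕ} (e0 : AIdx d Nγ) (i : Fin d) (t : List (Fin d))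
    (h1 : 0 < t.length) (h2 : t.length + 1 ≤ Nγ) :
    brIdx d Nγ (mkI e0 [i]) (mkI e0 t) = Finsupp.single (mkI e0 (i :: t)) 1 := by
  have hN1 : 1 ≤ Nγ := le_trans (by omega) h2
  have hva : ∀ j, (mkI e0 [i]).val j = List.count j [i] :=
    mkI_val e0 [i] (by simp) (by simpa using hN1)
  have hvt : ∀ j, (mkI e0 t).val j = t.count j := mkI_val e0 t h1 (by omega)
  have hsum : (∑ j, ((mkI e0 [i]).val j + (mkI e0 t).val j)) = t.length + 1 := by
    simp only [hva, hvt]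
    rw [Finset.sum_add_distrib, sum_count_fin, sum_count_fin]
    simp [Nat.add_comm]
  rw [brIdx, dif_pos (by rw [hsum]; exact h2)]
  congr 1
  apply Subtype.ext
  funext j
  have hvc : ∀ j, (mkI e0 (i :: t)).val j = (i :: t).count j :=
    mkI_val e0 (i :: t) (by simp) (by simpa using h2)
  simp only [hvc, hva, hvt, List.count_cons, List.count_nil, List.count_singleton']
  omega

lemma sum_split_empty {α M : Type*} [Fintype α] [DecidableEq α] [AddCommMonoid M]
    (f : Finset α → M) :
    ∑ T : Finset α, f T = f ∅ + ∑ T : Finset α, (if T ≠ ∅ then f T else 0) := by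
  rw [← Finset.sum_filter_add_sum_filter_not Finset.univ (fun T => T = ∅) f]
  congr 1
  · rw [show (Finset.univ.filter (fun T : Finset α => T = ∅)) = {∅} by
      rw [Finset.filter_eq' Finset.univ ∅, if_pos (Finset.mem_univ _)]]
    simp
  · rw [Finset.sum_filter]

variable {d : ℕ} (i : Fin d) (l' : List (Fin d))

lemma subL_symm_true (T : Finset (Fin l'.length)) :
    subL (i :: l') ((splitE l'.length).symm (true, T)) = i :: subL l' T := by
  rw [subL_cons]
  simp [(mem_zero_splitE_symm true T).2 rfl, downS_splitE_symm]

lemma subL_symm_true_compl (T : Finset (Fin l'.length)) :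
    subL (i :: l') (((splitE l'.length).symm (true, T))ᶜ) = subL l' Tᶜ := by
  rw [subL_cons]
  have h0 : (0 : Fin (l'.length + 1)) ∉ ((splitE l'.length).symm (true, T))ᶜ := by
    simp [Finset.mem_compl, (mem_zero_splitE_symm true T).2 rfl]
  simp [h0, downS_compl, downS_splitE_symm]

lemma subL_symm_false (T : Finset (Fin l'.length)) :
    subL (i :: l') ((splitE l'.length).symm (false, T)) = subL l' T := by
  rw [subL_cons]
  have h0 : (0 : Fin (l'.length + 1)) ∉ ((splitE l'.length).symm (false, T)) := by
    intro h
    exact Bool.false_ne_true ((mem_zero_splitE_symm false T).1 h)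
  simp [h0, downS_splitE_symm]

lemma subL_symm_false_compl (T : Finset (Fin l'.length)) :
    subL (i :: l') (((splitE l'.length).symm (false, T))ᶜ) = i :: subL l' Tᶜ := by
  rw [subL_cons]
  have h0 : (0 : Fin (l'.length + 1)) ∈ ((splitE l'.length).symm (false, T))ᶜ := by
    rw [Finset.mem_compl]
    intro h
    exact Bool.false_ne_true ((mem_zero_splitE_symm false T).1 h)
  simp [h0, downS_compl, downS_splitE_symm]

end Aux5
section Aux6

variable {d Nγ : ℕ}

lemma key_expansion (M' : TA (AIdx d Nγ) →ₗ[ℝ] TA (AIdx d Nγ) →ₗ[ℝ] TA (AIdx d Nγ))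
    (hM' : IsQuasiShuffle (brIdx d Nγ) M') (e0 : AIdx d Nγ) :
    ∀ l : List (Fin d), l ≠ [] → l.length ≤ Nγ →
      Pprod M' e0 l =
        ∑ S ∈ Finset.univ.filter (fun S : Finset (Fin l.length) => S ≠ ∅),
          appLetter (mkI e0 (subL l S)) (Pprod M' e0 (subL l Sᶜ)) := by
  intro l
  induction l with
  | nil => intro hl; exact absurd rfl hl
  | cons i l' IH =>
    intro _ hlen
    have hm1 : l'.length + 1 ≤ Nγ := by simpa using hlen
    -- the right-hand side, after reindexing by `splitE`
    have hRHS : (∑ S ∈ Finset.univ.filter (fun S : Finset (Fin (l'.length + 1)) => S ≠ ∅),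
          appLetter (mkI e0 (subL (i :: l') S)) (Pprod M' e0 (subL (i :: l') Sᶜ)))
        = (∑ T : Finset (Fin l'.length),
              appLetter (mkI e0 (i :: subL l' T)) (Pprod M' e0 (subL l' Tᶜ)))
          + ∑ T : Finset (Fin l'.length),
              (if T ≠ ∅ then
                appLetter (mkI e0 (subL l' T)) (Pprod M' e0 (i :: subL l' Tᶜ)) else 0) := by
      rw [Finset.sum_filter,
        ← Equiv.sum_comp (splitE l'.length).symm
          (fun S => if S ≠ ∅ then
            appLetter (mkI e0 (subL (i :: l') S)) (Pprod M' e0 (subL (i :: l') Sᶜ)) else 0),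
        Fintype.sum_prod_type, Fintype.sum_bool]
      congr 1
      · refine Finset.sum_congr rfl fun T _ => ?_
        rw [if_pos (by simp [splitE_symm_eq_empty]), subL_symm_true, subL_symm_true_compl]
      · refine Finset.sum_congr rfl fun T _ => ?_
        rw [subL_symm_false, subL_symm_false_compl]
        by_cases hT : T = ∅
        · rw [if_neg (by simp [splitE_symm_eq_empty, hT]), if_neg (by simp [hT])]
        · rw [if_pos (by simp [splitE_symm_eq_empty, hT]), if_pos hT]
    by_cases hl' : l' = []
    · subst hl'
      show Pprod M' e0 [i] =
        ∑ S ∈ Finset.univ.filter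
            (fun S : Finset (Fin (([] : List (Fin d)).length + 1)) => S ≠ ∅),
          appLetter (mkI e0 (subL [i] S)) (Pprod M' e0 (subL [i] Sᶜ))
      rw [hRHS, show Pprod M' e0 [i] = M' (wordE [mkI e0 [i]]) (wordE []) from rfl, hM'.2.1]
      have h0 : ∀ T : Finset (Fin ([] : List (Fin d)).length), T = ∅ := fun T =>
        Finset.eq_empty_of_forall_notMem (fun x _ => Fin.elim0 x)
      rw [Finset.sum_eq_single ∅ (fun T _ hT => absurd (h0 T) hT)
          (fun h => absurd (Finset.mem_univ _) h),
        Finset.sum_eq_single ∅ (fun T _ hT => absurd (h0 T) hT)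
          (fun h => absurd (Finset.mem_univ _) h)]
      rw [if_neg (by simp), subL_empty, Finset.compl_empty, subL_univ]
      rw [show Pprod M' e0 ([] : List (Fin d)) = wordE [] from rfl, appLetter_wordE]
      simp
    · have hml : 0 < l'.length := List.length_pos_iff.2 hl'
      have IH' := IH hl' (by omega)
      set a := mkI e0 [i] with ha
      have hL : Pprod M' e0 (i :: l') =
          ∑ T ∈ Finset.univ.filter (fun T : Finset (Fin l'.length) => T ≠ ∅),
            (appLetter a (appLetter (mkI e0 (subL l' T)) (Pprod M' e0 (subL l' Tᶜ)))
              + appLetter (mkI e0 (subL l' T)) (Pprod M' e0 (i :: subL l' Tᶜ))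
              + appLetter (mkI e0 (i :: subL l' T)) (Pprod M' e0 (subL l' Tᶜ))) := by
        rw [show Pprod M' e0 (i :: l') = M' (wordE [a]) (Pprod M' e0 l') from rfl]
        rw [IH', map_sum]
        refine Finset.sum_congr rfl fun T hT => ?_
        rw [qs_letter hM']
        have hTne : T ≠ ∅ := (Finset.mem_filter.1 hT).2
        have hcard : 0 < (subL l' T).length := by
          rw [length_subL]; exact Finset.card_pos.2 (Finset.nonempty_iff_ne_empty.2 hTne)
        have hcard2 : (subL l' T).length + 1 ≤ Nγ := by
          rw [length_subL]
          have := Finset.card_le_univ T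
          simp only [Finset.card_univ, Fintype.card_fin] at this
          omega
        rw [brIdx_mkI e0 i (subL l' T) hcard hcard2, appGen_single]
        rfl
      show Pprod M' e0 (i :: l') =
        ∑ S ∈ Finset.univ.filter (fun S : Finset (Fin (l'.length + 1)) => S ≠ ∅),
          appLetter (mkI e0 (subL (i :: l') S)) (Pprod M' e0 (subL (i :: l') Sᶜ))
      rw [hL, hRHS]
      rw [sum_split_empty (fun T : Finset (Fin l'.length) =>
        appLetter (mkI e0 (i :: subL l' T)) (Pprod M' e0 (subL l' Tᶜ)))]
      rw [subL_empty, Finset.compl_empty, subL_univ]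
      have hsplit : ∀ (f g h : Finset (Fin l'.length) → TA (AIdx d Nγ)),
          (∑ T ∈ Finset.univ.filter (fun T : Finset (Fin l'.length) => T ≠ ∅),
            (f T + g T + h T))
          = (∑ T ∈ Finset.univ.filter (fun T => T ≠ ∅), f T)
            + (∑ T ∈ Finset.univ.filter (fun T => T ≠ ∅), g T)
            + (∑ T ∈ Finset.univ.filter (fun T => T ≠ ∅), h T) := by
        intro f g h
        rw [Finset.sum_add_distrib, Finset.sum_add_distrib]
      rw [hsplit]
      have h1 : (∑ T ∈ Finset.univ.filter (fun T : Finset (Fin l'.length) => T ≠ ∅),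
          appLetter a (appLetter (mkI e0 (subL l' T)) (Pprod M' e0 (subL l' Tᶜ))))
          = appLetter (mkI e0 [i]) (Pprod M' e0 l') := by
        rw [← map_sum, ← IH']
      rw [h1, ← Finset.sum_filter, ← Finset.sum_filter]
      abel
end Aux6
section Aux7

variable {d Nγ : ℕ}

lemma dotPC_eq (t : List (Fin d)) :
    dotPC t = fE (FreeMonoid.ofList (t.map fun i => RT.node ([i] : List (Fin d)) [])) := by
  induction t with
  | nil =>
      show (1 : HBCK (List (Fin d))) = _
      rw [fE, MonoidAlgebra.one_def]
      rfl
  | cons i t ih =>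
      have hstep : dotPC (i :: t) = fE (FreeMonoid.ofList [RT.node ([i] : List (Fin d)) []]) * dotPC t := by
        rw [dotPC, List.map_cons, List.prod_cons]
        rfl
      rw [hstep, ih, fE, fE, MonoidAlgebra.single_mul_single, one_mul,
        ← FreeMonoid.ofList_append]
      rfl

variable (M' : TA (AIdx d Nγ) →ₗ[ℝ] TA (AIdx d Nγ) →ₗ[ℝ] TA (AIdx d Nγ))
    (ψS : HBCK (List (Fin d)) →ₗ[ℝ] TA (AIdx d Nγ))

lemma psi_dotPC
    (hψ1 : ψS (1 : HBCK (List (Fin d))) = wordE [])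
    (hψB : ∀ (t : List (Fin d)) (f : List (RT (List (Fin d)))) (e : AIdx d Nγ),
      (∀ j, e.val j = t.count j) →
      ψS (fE (FreeMonoid.ofList [RT.node t f])) =
        appLetter e (ψS (fE (FreeMonoid.ofList f))))
    (hψm : ∀ f g : FreeMonoid (RT (List (Fin d))),
      ψS (fE (f * g)) = M' (ψS (fE f)) (ψS (fE g)))
    (e0 : AIdx d Nγ) (hN1 : 1 ≤ Nγ) :
    ∀ t : List (Fin d), ψS (dotPC t) = Pprod M' e0 t := by
  have h1 : fE (FreeMonoid.ofList ([] : List (RT (List (Fin d))))) = 1 := by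
    rw [fE, MonoidAlgebra.one_def]; rfl
  intro t
  induction t with
  | nil =>
      rw [dotPC_eq, List.map_nil, h1, hψ1]; rfl
  | cons i t ih =>
      rw [dotPC_eq, List.map_cons,
        show (RT.node ([i] : List (Fin d)) [] :: List.map (fun i => RT.node ([i] : List (Fin d)) []) t)
          = [RT.node ([i] : List (Fin d)) []] ++ List.map (fun i => RT.node ([i] : List (Fin d)) []) t from rfl,
        FreeMonoid.ofList_append, hψm,
        hψB [i] [] (mkI e0 [i]) (mkI_val e0 [i] (by simp) (by simpa using hN1)),
        h1, hψ1, appLetter_wordE, ← dotPC_eq, ih]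
      rfl

lemma psi_Bplus_dotPC
    (hψB : ∀ (t : List (Fin d)) (f : List (RT (List (Fin d)))) (e : AIdx d Nγ),
      (∀ j, e.val j = t.count j) →
      ψS (fE (FreeMonoid.ofList [RT.node t f])) =
        appLetter e (ψS (fE (FreeMonoid.ofList f))))
    (t m : List (Fin d)) (e1 : AIdx d Nγ) (he1 : ∀ j, e1.val j = t.count j) :
    ψS (Bplus t (dotPC m)) = appLetter e1 (ψS (dotPC m)) := by
  rw [dotPC_eq m]
  have hB : Bplus t (fE (FreeMonoid.ofList (m.map fun i => RT.node ([i] : List (Fin d)) [])))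
      = fE (FreeMonoid.ofList [RT.node t (m.map fun i => RT.node ([i] : List (Fin d)) [])]) := by
    simp only [Bplus, fE, FreeMonoid.toList_ofList, FreeMonoid.ofList_singleton]
    erw [MonoidAlgebra.mapDomainLinearMap_single]
    rw [FreeMonoid.toList_ofList]
  rw [hB, hψB t _ e1 he1]

end Aux7
/-- the symmetrized contracting arborification `ψ_S` maps the
bracket polynomial `⟪i₁⋯iₙ⟫` to the single-letter word on the multi-index
`e_{i₁} + ⋯ + e_{iₙ}`. -/
theorem psiS_of_bracket_polynomial (d : ℕ)
    (γ : ℝ) (hγ0 : 0 < γ) (hγ1 : γ < 1)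
    (Nγ : ℕ) (hNγ : Nγ = Nat.floor γ⁻¹)
    (M' : TA (AIdx d Nγ) →ₗ[ℝ] TA (AIdx d Nγ) →ₗ[ℝ] TA (AIdx d Nγ))
    (hM' : IsQuasiShuffle (brIdx d Nγ) M')
    (ψS : HBCK (List (Fin d)) →ₗ[ℝ] TA (AIdx d Nγ))
    (hψ1 : ψS (1 : HBCK (List (Fin d))) = wordE [])
    (hψB : ∀ (t : List (Fin d)) (f : List (RT (List (Fin d)))) (e : AIdx d Nγ),
      (∀ j, e.val j = t.count j) →
      ψS (fE (FreeMonoid.ofList [RT.node t f])) =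
        appLetter e (ψS (fE (FreeMonoid.ofList f))))
    (hψm : ∀ f g : FreeMonoid (RT (List (Fin d))),
      ψS (fE (f * g)) = M' (ψS (fE f)) (ψS (fE g)))
    (l : List (Fin d)) (hl : l ≠ []) (hlen : l.length ≤ Nγ)
    (e : AIdx d Nγ) (he : ∀ j, e.val j = l.count j) :
    ψS (bpOfC l) = wordE [e] := by
  have hl0 : 0 < l.length := List.length_pos_iff.2 hl
  have hN1 : 1 ≤ Nγ := le_trans hl0 hlen
  have hpsi := psi_dotPC M' ψS hψ1 hψB hψm e hN1
  rw [bpOfC, map_sub, map_sum, hpsi]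
  have hterm : ∀ S ∈ (Finset.univ : Finset (Finset (Fin l.length))).filter
      (fun S => S ≠ ∅ ∧ S ≠ Finset.univ),
      ψS (Bplus (subL l S) (dotPC (subL l Sᶜ)))
        = appLetter (mkI e (subL l S)) (Pprod M' e (subL l Sᶜ)) := by
    intro S hS
    have hSne : S ≠ ∅ := ((Finset.mem_filter.1 hS).2).1
    have h1 : 0 < (subL l S).length := by
      rw [length_subL]; exact Finset.card_pos.2 (Finset.nonempty_iff_ne_empty.2 hSne)
    have h2 : (subL l S).length ≤ Nγ := by
      rw [length_subL]
      have := Finset.card_le_univ S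
      simp only [Finset.card_univ, Fintype.card_fin] at this
      omega
    rw [psi_Bplus_dotPC ψS hψB _ _ (mkI e (subL l S)) (mkI_val e _ h1 h2), hpsi]
  rw [Finset.sum_congr rfl hterm, key_expansion M' hM' e l hl hlen]
  haveI : Nonempty (Fin l.length) := ⟨⟨0, hl0⟩⟩
  have hu : (Finset.univ : Finset (Fin l.length)) ≠ ∅ := Finset.univ_nonempty.ne_empty
  have hins : (Finset.univ.filter (fun S : Finset (Fin l.length) => S ≠ ∅))
      = insert Finset.univ (Finset.univ.filter fun S => S ≠ ∅ ∧ S ≠ Finset.univ) := by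
    ext S
    simp only [Finset.mem_filter, Finset.mem_insert, Finset.mem_univ, true_and]
    constructor
    · intro h
      by_cases hSu : S = Finset.univ
      · exact Or.inl hSu
      · exact Or.inr ⟨h, hSu⟩
    · rintro (rfl | ⟨h, -⟩)
      · exact hu
      · exact h
  rw [hins, Finset.sum_insert (by simp), Finset.compl_univ, subL_empty, subL_univ,
    show Pprod M' e ([] : List (Fin d)) = wordE [] from rfl, appLetter_wordE,
    add_sub_cancel_right]
  have hme : mkI e l = e := by
    apply Subtype.ext; funext j
    rw [mkI_val e l hl0 hlen, he j]
  rw [hme]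
  rfl

end
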